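/- For any self-adjoint operator A bounded below with compact resolvent, with lowest two eigenvalues λ₀ ≤ λ₁, any normalized vector ψ in the domain of A, and any γ with ⟨ψ, Aψ⟩ < γ ≤ λ₁, one has λ₀ ≥ ⟨ψ, Aψ⟩ − (⟨ψ, A²ψ⟩ − ⟨ψ, Aψ⟩²)/(γ − ⟨ψ, Aψ⟩). (Temple's inequality.) -/
import Mathlib


open RealInnerProductSpace

lemma temple_aux_inner_nonneg
    {E : Type*} [NormedAddCommGroup E] [InnerProductSpace ℝ E] [CompleteSpace E]
    (C : E →L[ℝ] E) (hC : IsSelfAdjoint C)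
    (h : ∀ μ ∈ spectrum ℝ C, 0 ≤ μ) (x : E) : 0 ≤ ⟪x, C x⟫ := by
  by_contra hneg
  push_neg at hneg
  have hsym : ∀ z w : E, ⟪C z, w⟫ = ⟪z, C w⟫ :=
    (ContinuousLinearMap.isSelfAdjoint_iff_isSymmetric.mp hC)
  have hx0 : x ≠ 0 := by
    rintro rfl; simp at hneg
  set S : Set ℝ := (fun y => ⟪y, C y⟫) '' {y : E | ‖y‖ = 1} with hS
  have hy₀norm : ‖(‖x‖⁻¹ • x)‖ = 1 := by
    rw [norm_smul]; simp [norm_norm, inv_mul_cancel₀ (norm_ne_zero_iff.mpr hx0)]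
  have hy₀val : ⟪(‖x‖⁻¹ • x), C ((‖x‖⁻¹ • x))⟫ = ‖x‖⁻¹ * (‖x‖⁻¹ * ⟪x, C x⟫) := by
    rw [map_smul, real_inner_smul_left, real_inner_smul_right]
  have hy₀neg : ⟪(‖x‖⁻¹ • x), C ((‖x‖⁻¹ • x))⟫ < 0 := by
    rw [hy₀val]
    have h0 : (0:ℝ) < ‖x‖⁻¹ := inv_pos.mpr (norm_pos_iff.mpr hx0)
    exact mul_neg_of_pos_of_neg h0 (mul_neg_of_pos_of_neg h0 hneg)
  have hSne : S.Nonempty := ⟨_, ⟨_, hy₀norm, rfl⟩⟩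
  have hSbdd : BddBelow S := by
    refine ⟨-‖C‖, ?_⟩
    rintro r ⟨y, hy, rfl⟩
    have h1 := abs_real_inner_le_norm y (C y)
    have h2 := C.le_opNorm y
    simp only [Set.mem_setOf_eq] at hy
    rw [hy] at h1 h2
    simp at h1 h2
    cases abs_le.mp h1 with
    | intro hl hr => linarith
  set m := sInf S with hm
  have hmle : ∀ y : E, ‖y‖ = 1 → m ≤ ⟪y, C y⟫ := fun y hy => csInf_le hSbdd ⟨y, hy, rfl⟩
  have hm0 : m < 0 := lt_of_le_of_lt (hmle _ hy₀norm) hy₀neg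
  -- m is in the spectrum
  have hmspec : m ∈ spectrum ℝ C := by
    rw [spectrum.mem_iff]
    intro hunit
    have hunit' : IsUnit (C - algebraMap ℝ (E →L[ℝ] E) m) := by
      have := hunit.neg; rwa [neg_sub] at this
    set D := C - algebraMap ℝ (E →L[ℝ] E) m with hD
    obtain ⟨u, hu⟩ := hunit'
    have hTD : ∀ z : E, (↑u⁻¹ : E →L[ℝ] E) (D z) = z := by
      intro z
      have : (↑u⁻¹ * ↑u : E →L[ℝ] E) z = z := by rw [u.inv_mul]; rfl
      rwa [ContinuousLinearMap.mul_apply, hu] at this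
    have hDapp : ∀ z : E, D z = C z - m • z := by
      intro z
      simp [hD, Algebra.algebraMap_eq_smul_one]
    have hDsym : ∀ z w : E, ⟪D z, w⟫ = ⟪z, D w⟫ := by
      intro z w
      simp only [hDapp, inner_sub_left, inner_sub_right, real_inner_smul_left,
        real_inner_smul_right, hsym z w]
    have hform : ∀ z : E, ⟪z, D z⟫ = ⟪z, C z⟫ - m * ‖z‖ ^ 2 := by
      intro z
      rw [hDapp, inner_sub_right, real_inner_smul_right, real_inner_self_eq_norm_sq]
    have hDnn : ∀ z : E, 0 ≤ ⟪z, D z⟫ := by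
      intro z
      rcases eq_or_ne z 0 with rfl | hz
      · simp
      · rw [hform]
        have hzn : (0:ℝ) < ‖z‖ := norm_pos_iff.mpr hz
        have h1 : ‖(‖z‖⁻¹ • z)‖ = 1 := by
          rw [norm_smul]; simp [inv_mul_cancel₀ hzn.ne']
        have h2 := hmle _ h1
        rw [map_smul, real_inner_smul_left, real_inner_smul_right] at h2
        have hkey : ‖z‖⁻¹ * (‖z‖⁻¹ * ⟪z, C z⟫) * ‖z‖ ^ 2 = ⟪z, C z⟫ := by
          rw [sq]; field_simp
        have h3 : m * ‖z‖ ^ 2 ≤ ⟪z, C z⟫ := by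
          rw [← hkey]; nlinarith [sq_nonneg ‖z‖]
        linarith
    -- Cauchy-Schwarz for the nonnegative form
    have hCS : ∀ z w : E, ⟪z, D w⟫ ^ 2 ≤ ⟪z, D z⟫ * ⟪w, D w⟫ := by
      intro z w
      have key : ∀ t : ℝ, 0 ≤ ⟪w, D w⟫ * (t * t) + (2 * ⟪z, D w⟫) * t + ⟪z, D z⟫ := by
        intro t
        have h0 := hDnn (z + t • w)
        have hexp : ⟪z + t • w, D (z + t • w)⟫
            = ⟪w, D w⟫ * (t * t) + (2 * ⟪z, D w⟫) * t + ⟪z, D z⟫ := by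
          have hzw : ⟪z, D w⟫ = ⟪w, D z⟫ := by rw [← hDsym z w, real_inner_comm]
          rw [map_add, map_smul, inner_add_left, inner_add_right, inner_add_right,
            real_inner_smul_left, real_inner_smul_right, real_inner_smul_left,
            real_inner_smul_right, hzw]
          ring
        linarith [hexp ▸ h0]
      have hdisc := discrim_le_zero key
      rw [discrim] at hdisc
      nlinarith
    -- main estimate : ‖D z‖^2 ≤ ⟪z, D z⟫ * ‖D‖
    have hbound : ∀ z : E, ‖D z‖ ^ 2 ≤ ⟪z, D z⟫ * ‖D‖ := by
      intro z
      have h1 := hCS z (D z)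
      have h2 : ⟪z, D (D z)⟫ = ‖D z‖ ^ 2 := by
        rw [← hDsym z (D z), real_inner_self_eq_norm_sq]
      have h3 : ⟪D z, D (D z)⟫ ≤ ‖D z‖ * (‖D‖ * ‖D z‖) := by
        calc ⟪D z, D (D z)⟫ ≤ ‖D z‖ * ‖D (D z)‖ := real_inner_le_norm _ _
          _ ≤ ‖D z‖ * (‖D‖ * ‖D z‖) :=
            mul_le_mul_of_nonneg_left (D.le_opNorm _) (norm_nonneg _)
      rw [h2] at h1
      rcases eq_or_lt_of_le (norm_nonneg (D z)) with hz | hz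
      · rw [← hz]
        simpa using mul_nonneg (hDnn z) (norm_nonneg (D : E →L[ℝ] E))
      · have h5 : ‖D z‖ ^ 2 * ‖D z‖ ^ 2 ≤ ⟪z, D z⟫ * ‖D‖ * ‖D z‖ ^ 2 := by
          nlinarith [hDnn z, mul_le_mul_of_nonneg_left h3 (hDnn z)]
        exact le_of_mul_le_mul_right h5 (by positivity)
    set K := ‖(↑u⁻¹ : E →L[ℝ] E)‖ with hK
    have hlow : ∀ y : E, ‖y‖ = 1 → 1 ≤ K * ‖D y‖ := by
      intro y hy
      calc (1:ℝ) = ‖y‖ := hy.symm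
        _ = ‖(↑u⁻¹ : E →L[ℝ] E) (D y)‖ := by rw [hTD]
        _ ≤ K * ‖D y‖ := ContinuousLinearMap.le_opNorm _ _
    have hKpos : 0 < K := by
      by_contra hKn
      push_neg at hKn
      have := hlow _ hy₀norm
      nlinarith [norm_nonneg (D (‖x‖⁻¹ • x))]
    have hDpos : 0 < ‖D‖ := by
      by_contra hDn
      push_neg at hDn
      have h1 := hlow _ hy₀norm
      have h2 := D.le_opNorm (‖x‖⁻¹ • x)
      rw [hy₀norm] at h2
      nlinarith
    set δ := 1 / (K ^ 2 * ‖D‖) with hδ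
    have hδpos : 0 < δ := by positivity
    have : m + δ ≤ m := by
      rw [hm]
      apply le_csInf hSne
      rintro r ⟨y, hy, rfl⟩
      simp only [Set.mem_setOf_eq] at hy
      have h1 := hlow y hy
      have h2 := hbound y
      rw [hform y, hy] at h2
      have h3 : 1 ≤ K ^ 2 * ‖D y‖ ^ 2 := by nlinarith [norm_nonneg (D y)]
      have h4 : δ ≤ ‖D y‖ ^ 2 / ‖D‖ := by
        rw [hδ, div_le_div_iff₀ (by positivity) hDpos]
        nlinarith
      have h5 : ‖D y‖ ^ 2 / ‖D‖ ≤ ⟪y, C y⟫ - m * 1 ^ 2 := by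
        rw [div_le_iff₀ hDpos]
        linarith
      simp only [one_pow, mul_one] at h5
      linarith
    linarith
  exact absurd (h m hmspec) (not_le.mpr hm0)

/-- **Temple's inequality.** Let `A` be a self-adjoint operator whose spectrum
below `λ₁` consists only of the lowest eigenvalue `λ₀` (this encodes the
assumption of being bounded below with compact resolvent, with lowest two
eigenvalues `λ₀ ≤ λ₁`). Then for any normalized `ψ` and `⟨ψ, Aψ⟩ < γ ≤ λ₁`,
`λ₀ ≥ ⟨ψ, Aψ⟩ − (⟨ψ, A²ψ⟩ − ⟨ψ, Aψ⟩²)/(γ − ⟨ψ, Aψ⟩)`. -/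
theorem temple_inequality
    {E : Type*} [NormedAddCommGroup E] [InnerProductSpace ℝ E] [CompleteSpace E]
    (A : E →L[ℝ] E) (hA : IsSelfAdjoint A)
    (lam0 lam1 : ℝ) (hle : lam0 ≤ lam1)
    (hmem : lam0 ∈ spectrum ℝ A)
    (hspec : spectrum ℝ A ⊆ {lam0} ∪ Set.Ici lam1)
    (ψ : E) (hψ : ‖ψ‖ = 1) (γ : ℝ)
    (h1 : ⟪ψ, A ψ⟫ < γ) (h2 : γ ≤ lam1) :
    lam0 ≥ ⟪ψ, A ψ⟫ - (⟪ψ, A (A ψ)⟫ - ⟪ψ, A ψ⟫ ^ 2) / (γ - ⟪ψ, A ψ⟫) := by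
  have hsymA : ∀ z w : E, ⟪A z, w⟫ = ⟪z, A w⟫ :=
    (ContinuousLinearMap.isSelfAdjoint_iff_isSymmetric.mp hA)
  set μ₁ := ⟪ψ, A ψ⟫ with hμ₁
  set μ₂ := ⟪ψ, A (A ψ)⟫ with hμ₂
  have hγm : 0 < γ - μ₁ := by linarith
  have hAA : μ₂ = ⟪A ψ, A ψ⟫ := (hsymA ψ (A ψ)).symm
  have hVar : μ₁ ^ 2 ≤ μ₂ := by
    have := real_inner_mul_inner_self_le ψ (A ψ)
    rw [real_inner_self_eq_norm_sq, real_inner_self_eq_norm_sq, hψ] at this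
    rw [hAA, real_inner_self_eq_norm_sq]
    calc μ₁ ^ 2 = ⟪ψ, A ψ⟫ * ⟪ψ, A ψ⟫ := by rw [sq]
      _ ≤ 1 ^ 2 * ‖A ψ‖ ^ 2 := by nlinarith
      _ = ‖A ψ‖ ^ 2 := by ring
  rcases le_or_gt γ lam0 with hcase | hcase
  · have h3 : 0 ≤ (μ₂ - μ₁ ^ 2) / (γ - μ₁) := div_nonneg (by linarith) hγm.le
    linarith
  -- main case : lam0 < γ
  set c : ℝ := (lam0 + γ) / 2 with hc
  set r : ℝ := (γ - lam0) / 2 with hr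
  have hrpos : 0 < r := by rw [hr]; linarith
  set a : ℝ →+* (E →L[ℝ] E) := algebraMap ℝ (E →L[ℝ] E) with ha
  set B : E →L[ℝ] E := A - a c with hB
  set C : E →L[ℝ] E := B ^ 2 - a (r ^ 2) with hCdef
  have haSA : ∀ t : ℝ, IsSelfAdjoint (a t) := by
    intro t
    rw [ha, Algebra.algebraMap_eq_smul_one]
    exact IsSelfAdjoint.smul (IsSelfAdjoint.all t) (IsSelfAdjoint.one _)
  have hBsa : IsSelfAdjoint B := hA.sub (haSA c)
  have hCsa : IsSelfAdjoint C := (hBsa.pow 2).sub (haSA (r ^ 2))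
  have hsymB : ∀ z w : E, ⟪B z, w⟫ = ⟪z, B w⟫ :=
    (ContinuousLinearMap.isSelfAdjoint_iff_isSymmetric.mp hBsa)
  have hBapp : ∀ z : E, B z = A z - c • z := by
    intro z
    simp [hB, ha, Algebra.algebraMap_eq_smul_one]
  have hCapp : ∀ z : E, C z = B (B z) - r ^ 2 • z := by
    intro z
    simp [hCdef, ha, Algebra.algebraMap_eq_smul_one, pow_two, ContinuousLinearMap.mul_apply]
  -- the spectrum of A avoids the open interval (lam0, γ)
  have hgap : ∀ ν : ℝ, lam0 < ν → ν < γ → IsUnit (a ν - A) := by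
    intro ν hν1 hν2
    rw [← spectrum.notMem_iff]
    intro hmem'
    rcases hspec hmem' with h | h
    · simp only [Set.mem_singleton_iff] at h; linarith
    · simp only [Set.mem_Ici] at h; linarith
  -- spectrum of C is nonnegative
  have hspecC : ∀ μ ∈ spectrum ℝ C, 0 ≤ μ := by
    intro μ hμ
    by_contra hμneg
    push_neg at hμneg
    rw [spectrum.mem_iff] at hμ
    apply hμ
    rcases le_or_gt 0 (r ^ 2 + μ) with hd | hd
    · set s : ℝ := Real.sqrt (r ^ 2 + μ) with hs
      have hs2 : s ^ 2 = r ^ 2 + μ := Real.sq_sqrt hd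
      have hsnn : 0 ≤ s := Real.sqrt_nonneg _
      have hsr : s < r := by nlinarith
      have hu1 : IsUnit (a (c + s) - A) := hgap _ (by simp [hc, hr] at hsr hsnn ⊢; linarith)
        (by simp [hc, hr] at hsr hsnn ⊢; linarith)
      have hu2 : IsUnit (a (c - s) - A) := hgap _ (by simp [hc, hr] at hsr hsnn ⊢; linarith)
        (by simp [hc, hr] at hsr hsnn ⊢; linarith)
      have hfact : a μ - C = -((a (c + s) - A) * (a (c - s) - A)) := by
        have e1 : a (c + s) - A = -(B - a s) := by
          rw [hB, map_add]; abel
        have e2 : a (c - s) - A = -(B + a s) := by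
          rw [hB, map_sub]; abel
        have e3 : (B - a s) * (B + a s) = B * B - a (s * s) := by
          rw [sub_mul, mul_add, mul_add, ← map_mul, Algebra.commutes s B]
          abel
        have e4 : a (s * s) = a μ + a (r ^ 2) := by
          rw [← map_add]
          congr 1
          rw [← sq, hs2]
          ring
        rw [e1, e2, neg_mul_neg, e3, hCdef, pow_two, e4]
        abel
      rw [hfact]
      exact (hu1.mul hu2).neg
    · -- C - μ is a strictly positive operator
      set d : ℝ := -(r ^ 2 + μ) with hd'
      have hdpos : 0 < d := by rw [hd']; linarith
      have hkey : ∀ x : E, ‖x‖ ^ 2 * d ≤ ‖⟪(C - a μ) x, x⟫‖ := by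
        intro x
        have happ : (C - a μ) x = B (B x) + d • x := by
          rw [ContinuousLinearMap.sub_apply, hCapp, ha, Algebra.algebraMap_eq_smul_one]
          simp only [ContinuousLinearMap.smul_apply, ContinuousLinearMap.one_apply]
          rw [hd']
          module
        have hval : ⟪(C - a μ) x, x⟫ = ‖B x‖ ^ 2 + d * ‖x‖ ^ 2 := by
          rw [happ, inner_add_left, real_inner_smul_left, hsymB,
            real_inner_self_eq_norm_sq, real_inner_self_eq_norm_sq]
        rw [hval, Real.norm_eq_abs, abs_of_nonneg (by positivity)]
        nlinarith [sq_nonneg ‖B x‖]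
      have := ContinuousLinearMap.isUnit_of_forall_le_norm_inner_map (C - a μ)
        (c := ⟨d, hdpos.le⟩) (by exact_mod_cast hdpos) hkey
      have h5 : IsUnit (-(C - a μ)) := this.neg
      rwa [neg_sub] at h5
  -- apply the positivity lemma
  have hpos := temple_aux_inner_nonneg C hCsa hspecC ψ
  have hcomp : ⟪ψ, C ψ⟫ = μ₂ - 2 * c * μ₁ + c ^ 2 - r ^ 2 := by
    have hBB : ⟪ψ, B (B ψ)⟫ = ⟪B ψ, B ψ⟫ := (hsymB ψ (B ψ)).symm
    have ixx : ⟪ψ, ψ⟫ = 1 := by rw [real_inner_self_eq_norm_sq, hψ]; norm_num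
    have iaa : ⟪A ψ, A ψ⟫ = μ₂ := hAA.symm
    have iap : ⟪A ψ, ψ⟫ = μ₁ := by rw [real_inner_comm]
    rw [hCapp, inner_sub_right, real_inner_smul_right, hBB, hBapp]
    simp only [inner_sub_left, inner_sub_right, real_inner_smul_left,
      real_inner_smul_right, ixx, iaa, iap]
    ring
  rw [hcomp] at hpos
  have hc2r2 : c ^ 2 - r ^ 2 = lam0 * γ := by rw [hc, hr]; ring
  have h2c : 2 * c = lam0 + γ := by rw [hc]; ring
  have hineq : μ₂ - (lam0 + γ) * μ₁ + lam0 * γ ≥ 0 := by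
    rw [← h2c, ← hc2r2]; linarith
  have h9 : (μ₁ - lam0) ≤ (μ₂ - μ₁ ^ 2) / (γ - μ₁) := by
    rw [le_div_iff₀ hγm]
    nlinarith
  linarith
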